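/- Finiteness of steady-state quadratic moments under MaxWeight (Lemma 5.1). Fix n ≥ 1 and suppose the arrival mean matrix λ lies in the interior of the capacity region C, i.e., there exists ε₁ > 0 such that the matrix with entries λ_{ij} + ε₁ has all row sums and column sums at most 1. Let π be an invariant distribution of the MaxWeight Markov chain. Then E_π[(∑_{ij} q̄_{ij})²] < ∞; in particular E_π[∑_{ij} q̄_{ij}²], E_π[∑_i (∑_j q̄_{ij})²] and E_π[∑_j (∑_i q̄_{ij})²] are all finite. -/

import Mathlib

open scoped BigOperators ENNReal

namespace SwitchModel

/-- Next queue state: `q⁺_{ij} = max(q_{ij} + a_{ij} − s_{ij}, 0)` (truncated `ℕ` subtraction). -/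
def nextQ (n : ℕ) (q a s : Fin n → Fin n → ℕ) : Fin n → Fin n → ℕ :=
  fun i j => q i j + a i j - s i j

/-- A 0–1 matrix with at most one 1 per row and per column. -/
def IsSchedule (n : ℕ) (s : Fin n → Fin n → ℕ) : Prop :=
  (∀ i j, s i j ≤ 1) ∧ (∀ i, (∑ j, s i j) ≤ 1) ∧ (∀ j, (∑ i, s i j) ≤ 1)

/-- A permutation matrix: exactly one 1 per row and per column. -/
def IsPerm (n : ℕ) (s : Fin n → Fin n → ℕ) : Prop :=
  (∀ i j, s i j ≤ 1) ∧ (∀ i, (∑ j, s i j) = 1) ∧ (∀ j, (∑ i, s i j) = 1)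

/-- MaxWeight selection: `sched q` is a permutation matrix maximizing `∑ q_{ij} s_{ij}`. -/
def IsMaxWeight (n : ℕ) (sched : (Fin n → Fin n → ℕ) → (Fin n → Fin n → ℕ)) : Prop :=
  ∀ q, IsPerm n (sched q) ∧
    ∀ s, IsPerm n s → (∑ i, ∑ j, q i j * s i j) ≤ (∑ i, ∑ j, q i j * sched q i j)

/-- Joint arrival probability: the entries are mutually independent with marginals `A i j`. -/
noncomputable def jointA (n : ℕ) (A : Fin n → Fin n → ℕ → ℝ≥0∞) (a : Fin n → Fin n → ℕ) : ℝ≥0∞ :=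
  ∏ i, ∏ j, A i j (a i j)

/-- `A i j` is a probability distribution on `ℕ` supported on `[0, amax]`,
with mean `lam i j` and variance `(sig i j)^2`. -/
def ArrivalDist (n : ℕ) (A : Fin n → Fin n → ℕ → ℝ≥0∞)
    (lam sig : Fin n → Fin n → ℝ) (amax : ℕ) : Prop :=
  (∀ i j, (∑' k : ℕ, A i j k) = 1) ∧
  (∀ i j k, A i j k ≠ 0 → k ≤ amax) ∧
  (∀ i j, (∑' k : ℕ, (A i j k).toReal * (k : ℝ)) = lam i j) ∧
  (∀ i j, (∑' k : ℕ, (A i j k).toReal * ((k : ℝ) - lam i j) ^ 2) = (sig i j) ^ 2)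

/-- Transition kernel of the switch under a deterministic scheduling map `sched`. -/
noncomputable def kernelMW (n : ℕ) (A : Fin n → Fin n → ℕ → ℝ≥0∞)
    (sched : (Fin n → Fin n → ℕ) → (Fin n → Fin n → ℕ))
    (q q' : Fin n → Fin n → ℕ) : ℝ≥0∞ :=
  ∑' a : Fin n → Fin n → ℕ, jointA n A a * (if nextQ n q a (sched q) = q' then 1 else 0)

/-- Transition kernel of the switch under a randomized scheduling policy `pol`
(the schedule is chosen independently of the current arrivals). -/
noncomputable def kernelPol (n : ℕ) (A : Fin n → Fin n → ℕ → ℝ≥0∞)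
    (pol : (Fin n → Fin n → ℕ) → (Fin n → Fin n → ℕ) → ℝ≥0∞)
    (q q' : Fin n → Fin n → ℕ) : ℝ≥0∞ :=
  ∑' a : Fin n → Fin n → ℕ, ∑' s : Fin n → Fin n → ℕ,
    jointA n A a * pol q s * (if nextQ n q a s = q' then 1 else 0)

/-- `pd` is an invariant (stationary) probability distribution of the kernel `P`. -/
def IsInvariant (n : ℕ)
    (P : (Fin n → Fin n → ℕ) → (Fin n → Fin n → ℕ) → ℝ≥0∞)
    (pd : (Fin n → Fin n → ℕ) → ℝ≥0∞) : Prop :=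
  (∑' q : Fin n → Fin n → ℕ, pd q) = 1 ∧
  ∀ q', (∑' q : Fin n → Fin n → ℕ, pd q * P q q') = pd q'

/-- The face `F`: nonnegative matrices with all row and column sums equal to 1. -/
def memF (n : ℕ) (ν : Fin n → Fin n → ℝ) : Prop :=
  (∀ i j, 0 ≤ ν i j) ∧ (∀ i, (∑ j, ν i j) = 1) ∧ (∀ j, (∑ i, ν i j) = 1)

/-- Steady-state expectation of the total queue length `∑_{ij} q_{ij}`. -/
noncomputable def Etot (n : ℕ) (pd : (Fin n → Fin n → ℕ) → ℝ≥0∞) : ℝ≥0∞ :=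
  ∑' q : Fin n → Fin n → ℕ, pd q * (∑ i, ∑ j, (q i j : ℝ≥0∞))

/-- Steady-state expectation of `(∑_{ij} q_{ij})²`. -/
noncomputable def Etot2 (n : ℕ) (pd : (Fin n → Fin n → ℕ) → ℝ≥0∞) : ℝ≥0∞ :=
  ∑' q : Fin n → Fin n → ℕ, pd q * (∑ i, ∑ j, (q i j : ℝ≥0∞)) ^ 2

/-- Euclidean norm on `ℝ^{n×n}`. -/
noncomputable def normE (n : ℕ) (x : Fin n → Fin n → ℝ) : ℝ :=
  Real.sqrt (∑ i, ∑ j, x i j ^ 2)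

/-- The cone `K = {x : x_{ij} = w_i + w̃_j, w, w̃ ≥ 0}`. -/
def coneK (n : ℕ) : Set (Fin n → Fin n → ℝ) :=
  {x | ∃ w wt : Fin n → ℝ, (∀ i, 0 ≤ w i) ∧ (∀ j, 0 ≤ wt j) ∧ ∀ i j, x i j = w i + wt j}

/-- Embedding of queue states into `ℝ^{n×n}`. -/
def toR (n : ℕ) (q : Fin n → Fin n → ℕ) : Fin n → Fin n → ℝ :=
  fun i j => (q i j : ℝ)

/-- `proj` is the nearest-point projection onto the cone `K`. -/
def IsConeProj (n : ℕ) (proj : (Fin n → Fin n → ℝ) → (Fin n → Fin n → ℝ)) : Prop :=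
  ∀ x, proj x ∈ coneK n ∧ ∀ y ∈ coneK n, normE n (x - proj x) ≤ normE n (x - y)

/-- Bernoulli distribution on `ℕ` with success probability `p`. -/
noncomputable def bern (p : ℝ) : ℕ → ℝ≥0∞ :=
  fun k => if k = 0 then ENNReal.ofReal (1 - p) else if k = 1 then ENNReal.ofReal p else 0

end SwitchModel

open SwitchModel

namespace SwitchProof
open Finset SwitchModel

variable {n amax : ℕ}

/-- Support finset of arrival matrices. -/
def SuppA (n amax : ℕ) : Finset (Fin n → Fin n → ℕ) :=
  Fintype.piFinset fun _ => Fintype.piFinset fun _ => Finset.range (amax + 1)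

lemma mem_SuppA {a : Fin n → Fin n → ℕ} :
    a ∈ SuppA n amax ↔ ∀ i j, a i j ≤ amax := by
  simp [SuppA, Fintype.mem_piFinset, Nat.lt_succ_iff]

lemma marg {M : Type*} [CommSemiring M] (h : Fin n → Fin n → ℕ → M) :
    (∏ i, ∏ j, ∑ k ∈ Finset.range (amax + 1), h i j k)
      = ∑ a ∈ SuppA n amax, ∏ i, ∏ j, h i j (a i j) :=
  calc (∏ i, ∏ j, ∑ k ∈ Finset.range (amax + 1), h i j k)
      = ∏ i, ∑ f ∈ Fintype.piFinset (fun _ : Fin n => Finset.range (amax + 1)),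
          ∏ j, h i j (f j) :=
        Finset.prod_congr rfl fun i _ => Finset.prod_univ_sum _ _
    _ = ∑ a ∈ SuppA n amax, ∏ i, ∏ j, h i j (a i j) := Finset.prod_univ_sum _ _

section Arrivals

variable {A : Fin n → Fin n → ℕ → ℝ≥0∞} {lam sig : Fin n → Fin n → ℝ}
  (hA : ArrivalDist n A lam sig amax)

include hA

lemma A_ne_top (i j : Fin n) (k : ℕ) : A i j k ≠ ⊤ := by
  intro h
  have h2 : (⊤ : ℝ≥0∞) ≤ ∑' k, A i j k := h ▸ ENNReal.le_tsum k
  rw [hA.1 i j] at h2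
  simp at h2

lemma sum_A (i j : Fin n) : ∑ k ∈ Finset.range (amax + 1), A i j k = 1 := by
  rw [← hA.1 i j]
  symm
  apply tsum_eq_sum
  intro k hk
  by_contra h
  exact hk (Finset.mem_range.2 (Nat.lt_succ_of_le (hA.2.1 i j k h)))

lemma sum_R (i j : Fin n) :
    ∑ k ∈ Finset.range (amax + 1), (A i j k).toReal = 1 := by
  rw [← ENNReal.toReal_sum (fun k _ => A_ne_top hA i j k), sum_A hA, ENNReal.toReal_one]

lemma mean_R (i j : Fin n) :
    ∑ k ∈ Finset.range (amax + 1), (A i j k).toReal * (k : ℝ) = lam i j := by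
  rw [← hA.2.2.1 i j]
  symm
  apply tsum_eq_sum
  intro k hk
  have h0 : A i j k = 0 := by
    by_contra h
    exact hk (Finset.mem_range.2 (Nat.lt_succ_of_le (hA.2.1 i j k h)))
  simp [h0]

lemma lam_nonneg (i j : Fin n) : 0 ≤ lam i j := by
  rw [← mean_R hA i j]
  exact Finset.sum_nonneg fun k _ => mul_nonneg ENNReal.toReal_nonneg (Nat.cast_nonneg _)

end Arrivals

/-- Real weight of an arrival matrix. -/
noncomputable def wA (n : ℕ) (A : Fin n → Fin n → ℕ → ℝ≥0∞) (a : Fin n → Fin n → ℕ) : ℝ :=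
  ∏ i, ∏ j, (A i j (a i j)).toReal

lemma wA_nonneg (A : Fin n → Fin n → ℕ → ℝ≥0∞) (a : Fin n → Fin n → ℕ) :
    0 ≤ wA n A a :=
  Finset.prod_nonneg fun i _ => Finset.prod_nonneg fun j _ => ENNReal.toReal_nonneg

section Arrivals2

variable {A : Fin n → Fin n → ℕ → ℝ≥0∞} {lam sig : Fin n → Fin n → ℝ}
  (hA : ArrivalDist n A lam sig amax)

include hA

lemma jointA_ne_top (a : Fin n → Fin n → ℕ) : jointA n A a ≠ ⊤ := by
  refine ENNReal.prod_ne_top fun i _ => ENNReal.prod_ne_top fun j _ => A_ne_top hA i j _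

lemma jointA_eq_ofReal (a : Fin n → Fin n → ℕ) :
    jointA n A a = ENNReal.ofReal (wA n A a) := by
  have h1 : (jointA n A a).toReal = wA n A a := by
    rw [jointA, ENNReal.toReal_prod]
    exact Finset.prod_congr rfl fun i _ => ENNReal.toReal_prod _ _
  rw [← h1, ENNReal.ofReal_toReal (jointA_ne_top hA a)]

lemma jointA_eq_zero {a : Fin n → Fin n → ℕ} (ha : a ∉ SuppA n amax) :
    jointA n A a = 0 := by
  rw [mem_SuppA] at ha
  push_neg at ha
  obtain ⟨i, j, hij⟩ := ha
  have h0 : A i j (a i j) = 0 := by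
    by_contra h
    exact absurd (hA.2.1 i j _ h) (by omega)
  exact Finset.prod_eq_zero (Finset.mem_univ i) (Finset.prod_eq_zero (Finset.mem_univ j) h0)

lemma sum_wA : ∑ a ∈ SuppA n amax, wA n A a = 1 := by
  simp only [wA]
  rw [← marg (fun i j k => (A i j k).toReal)]
  rw [Finset.prod_congr rfl fun i _ => Finset.prod_congr rfl fun j _ => sum_R hA i j]
  simp

end Arrivals2

section Arrivals3

variable {A : Fin n → Fin n → ℕ → ℝ≥0∞} {lam sig : Fin n → Fin n → ℝ}
  (hA : ArrivalDist n A lam sig amax)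

include hA

lemma exp_coord (φ : ℕ → ℝ) (i₀ j₀ : Fin n) :
    ∑ a ∈ SuppA n amax, wA n A a * φ (a i₀ j₀)
      = ∑ k ∈ Finset.range (amax + 1), (A i₀ j₀ k).toReal * φ k := by
  have key : ∀ a : Fin n → Fin n → ℕ, wA n A a * φ (a i₀ j₀)
      = ∏ i, ∏ j, ((A i j (a i j)).toReal *
          (if i = i₀ then (if j = j₀ then φ (a i j) else 1) else 1)) := by
    intro a
    rw [Finset.prod_congr rfl fun i _ => Finset.prod_mul_distrib, Finset.prod_mul_distrib]
    congr 1
    symm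
    rw [Finset.prod_eq_single_of_mem i₀ (Finset.mem_univ _)
      (fun i _ hi => Finset.prod_eq_one (fun j _ => by simp [hi]))]
    rw [Finset.prod_eq_single_of_mem j₀ (Finset.mem_univ _) (fun j _ hj => by simp [hj])]
    simp
  rw [Finset.sum_congr rfl fun a _ => key a,
    ← marg (fun i j k => (A i j k).toReal *
        (if i = i₀ then (if j = j₀ then φ k else 1) else 1))]
  have inner : ∀ i j : Fin n, (∑ k ∈ Finset.range (amax + 1), (A i j k).toReal *
      (if i = i₀ then (if j = j₀ then φ k else 1) else 1))
      = if i = i₀ then (if j = j₀ then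
          ∑ k ∈ Finset.range (amax + 1), (A i j k).toReal * φ k else 1) else 1 := by
    intro i j
    by_cases hi : i = i₀ <;> by_cases hj : j = j₀ <;> simp [hi, hj, sum_R hA]
  rw [Finset.prod_congr rfl fun i _ => Finset.prod_congr rfl fun j _ => inner i j]
  rw [Finset.prod_eq_single_of_mem i₀ (Finset.mem_univ _)
    (fun i _ hi => Finset.prod_eq_one (fun j _ => by simp [hi]))]
  rw [Finset.prod_eq_single_of_mem j₀ (Finset.mem_univ _) (fun j _ hj => by simp [hj])]
  simp

lemma mean_a (i₀ j₀ : Fin n) :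
    ∑ a ∈ SuppA n amax, wA n A a * (a i₀ j₀ : ℝ) = lam i₀ j₀ := by
  rw [exp_coord hA (fun k => (k : ℝ)) i₀ j₀, mean_R hA]

end Arrivals3


section Birkhoff

open Matrix

lemma exists_ds (x : Fin n → Fin n → ℝ) (h0 : ∀ i j, 0 ≤ x i j)
    (hr : ∀ i, (∑ j, x i j) ≤ 1) (hc : ∀ j, (∑ i, x i j) ≤ 1) :
    ∃ y : Matrix (Fin n) (Fin n) ℝ, y ∈ doublyStochastic ℝ (Fin n) ∧ ∀ i j, x i j ≤ y i j := by
  classical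
  set D : ℝ := ∑ i, (1 - ∑ j, x i j) with hD
  have hswap : ∑ j, ∑ i, x i j = ∑ i, ∑ j, x i j := Finset.sum_comm
  have hD' : ∑ j, (1 - ∑ i, x i j) = D := by
    rw [hD, Finset.sum_sub_distrib, Finset.sum_sub_distrib, hswap]
  have hri : ∀ i, 0 ≤ 1 - ∑ j, x i j := fun i => by linarith [hr i]
  have hcj : ∀ j, 0 ≤ 1 - ∑ i, x i j := fun j => by linarith [hc j]
  have hD0 : 0 ≤ D := Finset.sum_nonneg fun i _ => hri i
  by_cases hDz : D = 0
  · refine ⟨Matrix.of x, ?_, fun i j => le_refl _⟩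
    rw [mem_doublyStochastic_iff_sum]
    have h1 : ∀ i ∈ Finset.univ, (1 - ∑ j, x i j) = 0 :=
      (Finset.sum_eq_zero_iff_of_nonneg (fun i _ => hri i)).1 (hD ▸ hDz)
    have h2 : ∀ j ∈ Finset.univ, (1 - ∑ i, x i j) = 0 :=
      (Finset.sum_eq_zero_iff_of_nonneg (fun j _ => hcj j)).1 (by rw [hD']; exact hDz)
    refine ⟨fun i j => h0 i j, fun i => by have := h1 i (Finset.mem_univ i); simp at this ⊢; linarith,
      fun j => by have := h2 j (Finset.mem_univ j); simp at this ⊢; linarith⟩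
  · have hDpos : 0 < D := lt_of_le_of_ne hD0 (Ne.symm hDz)
    refine ⟨Matrix.of (fun i j => x i j + (1 - ∑ j', x i j') * (1 - ∑ i', x i' j) / D), ?_, ?_⟩
    · rw [mem_doublyStochastic_iff_sum]
      refine ⟨fun i j => by
        have := mul_nonneg (hri i) (hcj j)
        have := div_nonneg this hD0
        simp only [Matrix.of_apply]
        linarith [h0 i j], fun i => ?_, fun j => ?_⟩
      · simp only [Matrix.of_apply]
        rw [Finset.sum_add_distrib]
        have : ∑ j, (1 - ∑ j', x i j') * (1 - ∑ i', x i' j) / D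
            = (1 - ∑ j', x i j') * (∑ j, (1 - ∑ i', x i' j)) / D := by
          rw [Finset.mul_sum, Finset.sum_div]
        rw [this, hD', mul_div_assoc, div_self hDz, mul_one]
        ring
      · simp only [Matrix.of_apply]
        rw [Finset.sum_add_distrib]
        have : ∑ i, (1 - ∑ j', x i j') * (1 - ∑ i', x i' j) / D
            = (∑ i, (1 - ∑ j', x i j')) * (1 - ∑ i', x i' j) / D := by
          rw [Finset.sum_mul, Finset.sum_div]
        rw [this, ← hD, mul_comm, mul_div_assoc, div_self hDz, mul_one]
        ring
    · intro i j
      simp only [Matrix.of_apply]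
      have := mul_nonneg (hri i) (hcj j)
      have := div_nonneg this hD0
      linarith

lemma isPerm_of_equiv (σ : Equiv.Perm (Fin n)) :
    IsPerm n (fun i j => if σ i = j then 1 else 0) := by
  refine ⟨fun i j => by dsimp only; split <;> simp, fun i => by simp, fun j => ?_⟩
  have : ∀ i : Fin n, (if σ i = j then (1:ℕ) else 0) = if i = σ.symm j then 1 else 0 := by
    intro i
    simp [Equiv.apply_eq_iff_eq_symm_apply]
  rw [Finset.sum_congr rfl fun i _ => this i]
  simp

lemma dot_le_maxweight
    {sched : (Fin n → Fin n → ℕ) → (Fin n → Fin n → ℕ)} (hsched : IsMaxWeight n sched)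
    (q : Fin n → Fin n → ℕ) (x : Fin n → Fin n → ℝ) (h0 : ∀ i j, 0 ≤ x i j)
    (hr : ∀ i, (∑ j, x i j) ≤ 1) (hc : ∀ j, (∑ i, x i j) ≤ 1) :
    (∑ i, ∑ j, (q i j : ℝ) * x i j) ≤ ∑ i, ∑ j, (q i j : ℝ) * (sched q i j : ℝ) := by
  classical
  obtain ⟨y, hy, hxy⟩ := exists_ds x h0 hr hc
  obtain ⟨w, hw0, hw1, hw3⟩ := exists_eq_sum_perm_of_mem_doublyStochastic hy
  set m : ℝ := ∑ i, ∑ j, (q i j : ℝ) * (sched q i j : ℝ) with hm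
  have step1 : (∑ i, ∑ j, (q i j : ℝ) * x i j) ≤ ∑ i, ∑ j, (q i j : ℝ) * y i j :=
    Finset.sum_le_sum fun i _ => Finset.sum_le_sum fun j _ =>
      mul_le_mul_of_nonneg_left (hxy i j) (Nat.cast_nonneg _)
  have hyij : ∀ i j, y i j = ∑ σ : Equiv.Perm (Fin n), w σ * (if σ i = j then 1 else 0) := by
    intro i j
    rw [← hw3]
    simp [Matrix.sum_apply, Equiv.Perm.permMatrix, PEquiv.toMatrix_toPEquiv_eq,
      Matrix.one_apply, mul_ite, mul_one, mul_zero, PEquiv.toMatrix_apply, Equiv.toPEquiv_apply]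
  have step2 : (∑ i, ∑ j, (q i j : ℝ) * y i j)
      = ∑ σ : Equiv.Perm (Fin n), w σ * (∑ i, (q i (σ i) : ℝ)) := by
    have inner : ∀ i, (∑ j, (q i j : ℝ) * y i j)
        = ∑ σ : Equiv.Perm (Fin n), w σ * (q i (σ i) : ℝ) := by
      intro i
      rw [Finset.sum_congr rfl fun j _ => by rw [hyij i j, Finset.mul_sum]]
      rw [Finset.sum_comm]
      refine Finset.sum_congr rfl fun σ _ => ?_
      rw [Finset.sum_congr rfl fun j _ => show (q i j : ℝ) * (w σ * (if σ i = j then 1 else 0))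
        = if σ i = j then w σ * (q i j : ℝ) else 0 by split <;> simp <;> ring]
      simp
    rw [Finset.sum_congr rfl fun i _ => inner i, Finset.sum_comm]
    exact Finset.sum_congr rfl fun σ _ => by rw [Finset.mul_sum]
  have step3 : ∀ σ : Equiv.Perm (Fin n), (∑ i, (q i (σ i) : ℝ)) ≤ m := by
    intro σ
    have hperm := isPerm_of_equiv (n := n) σ
    have hle := (hsched q).2 _ hperm
    have hcast : ((∑ i, ∑ j, q i j * (fun i j => if σ i = j then 1 else 0) i j : ℕ) : ℝ)
        ≤ ((∑ i, ∑ j, q i j * sched q i j : ℕ) : ℝ) := Nat.cast_le.2 hle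
    push_cast at hcast
    rw [hm]
    refine le_trans (le_of_eq ?_) hcast
    refine Finset.sum_congr rfl fun i _ => ?_
    rw [Finset.sum_congr rfl fun j _ => show ((q i j : ℝ)) * (if σ i = j then (1:ℝ) else 0)
      = if σ i = j then (q i j : ℝ) else 0 by split <;> simp]
    simp
  calc (∑ i, ∑ j, (q i j : ℝ) * x i j) ≤ ∑ i, ∑ j, (q i j : ℝ) * y i j := step1
    _ = ∑ σ : Equiv.Perm (Fin n), w σ * (∑ i, (q i (σ i) : ℝ)) := step2
    _ ≤ ∑ σ : Equiv.Perm (Fin n), w σ * m :=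
        Finset.sum_le_sum fun σ _ => mul_le_mul_of_nonneg_left (step3 σ) (hw0 σ)
    _ = m := by rw [← Finset.sum_mul, hw1, one_mul]

end Birkhoff

section RealQuantities

noncomputable def tot (n : ℕ) (q : Fin n → Fin n → ℕ) : ℝ := ∑ i, ∑ j, (q i j : ℝ)

noncomputable def Vr (n : ℕ) (q : Fin n → Fin n → ℕ) : ℝ := ∑ i, ∑ j, (q i j : ℝ) ^ 2

noncomputable def cube (n : ℕ) (q : Fin n → Fin n → ℕ) : ℝ := Real.sqrt (Vr n q) ^ 3

lemma tot_nonneg (q : Fin n → Fin n → ℕ) : 0 ≤ tot n q :=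
  Finset.sum_nonneg fun i _ => Finset.sum_nonneg fun j _ => Nat.cast_nonneg _

lemma Vr_nonneg (q : Fin n → Fin n → ℕ) : 0 ≤ Vr n q :=
  Finset.sum_nonneg fun i _ => Finset.sum_nonneg fun j _ => sq_nonneg _

lemma cube_nonneg (q : Fin n → Fin n → ℕ) : 0 ≤ cube n q := by
  unfold cube; positivity

lemma sq_sqrt_Vr (q : Fin n → Fin n → ℕ) : Real.sqrt (Vr n q) ^ 2 = Vr n q :=
  Real.sq_sqrt (Vr_nonneg q)

lemma entry_le_tot (q : Fin n → Fin n → ℕ) (i j : Fin n) : (q i j : ℝ) ≤ tot n q := by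
  have h1 : (q i j : ℝ) ≤ ∑ j', (q i j' : ℝ) :=
    Finset.single_le_sum (f := fun j' => (q i j' : ℝ))
      (fun _ _ => Nat.cast_nonneg _) (Finset.mem_univ j)
  have h2 : (∑ j', (q i j' : ℝ)) ≤ tot n q :=
    Finset.single_le_sum (f := fun i => ∑ j', (q i j' : ℝ))
      (fun _ _ => Finset.sum_nonneg fun _ _ => Nat.cast_nonneg _) (Finset.mem_univ i)
  linarith

lemma sqrt_Vr_le_tot (q : Fin n → Fin n → ℕ) : Real.sqrt (Vr n q) ≤ tot n q := by
  have h1 : Vr n q ≤ (tot n q) ^ 2 := by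
    have h2 : ∀ i j : Fin n, (q i j : ℝ) ^ 2 ≤ (q i j : ℝ) * tot n q := fun i j => by
      rw [sq]
      exact mul_le_mul_of_nonneg_left (entry_le_tot q i j) (Nat.cast_nonneg _)
    calc Vr n q ≤ ∑ i, ∑ j, (q i j : ℝ) * tot n q :=
          Finset.sum_le_sum fun i _ => Finset.sum_le_sum fun j _ => h2 i j
      _ = (∑ i, (∑ j, (q i j:ℝ)) * tot n q) :=
            Finset.sum_congr rfl fun i _ => (Finset.sum_mul _ _ _).symm
      _ = (tot n q) ^ 2 := by rw [← Finset.sum_mul, ← tot, sq]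
  calc Real.sqrt (Vr n q) ≤ Real.sqrt ((tot n q) ^ 2) := Real.sqrt_le_sqrt h1
    _ = tot n q := Real.sqrt_sq (tot_nonneg q)

lemma tot_le_sqrt (q : Fin n → Fin n → ℕ) : tot n q ≤ n * Real.sqrt (Vr n q) := by
  have flat : tot n q = ∑ p : Fin n × Fin n, (q p.1 p.2 : ℝ) := by
    rw [tot]; exact (Fintype.sum_prod_type (f := fun p : Fin n × Fin n => (q p.1 p.2 : ℝ))).symm
  have flat2 : Vr n q = ∑ p : Fin n × Fin n, (q p.1 p.2 : ℝ) ^ 2 := by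
    rw [Vr]; exact (Fintype.sum_prod_type (f := fun p : Fin n × Fin n => (q p.1 p.2 : ℝ)^2)).symm
  have h1 : (tot n q) ^ 2 ≤ (n : ℝ) ^ 2 * Vr n q := by
    rw [flat, flat2]
    have := sq_sum_le_card_mul_sum_sq (s := (Finset.univ : Finset (Fin n × Fin n)))
      (f := fun p => (q p.1 p.2 : ℝ))
    simpa [Finset.card_univ, sq, mul_assoc] using this
  have h2 : (tot n q) ^ 2 ≤ (n * Real.sqrt (Vr n q)) ^ 2 := by
    rw [mul_pow, sq_sqrt_Vr]; exact h1
  have h3 : (0:ℝ) ≤ n * Real.sqrt (Vr n q) := by positivity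
  nlinarith [tot_nonneg q]

lemma sum_sq_add_expand (y : Fin n → Fin n → ℕ) (c : ℝ) :
    ∑ i, ∑ j, ((y i j : ℝ) + c) ^ 2 = Vr n y + 2 * c * tot n y + (n : ℝ) ^ 2 * c ^ 2 := by
  have h : ∀ i j : Fin n, ((y i j : ℝ) + c) ^ 2 = (y i j : ℝ)^2 + 2*c*(y i j : ℝ) + c^2 :=
    fun i j => by ring
  rw [Finset.sum_congr rfl fun i _ => Finset.sum_congr rfl fun j _ => h i j]
  simp only [Finset.sum_add_distrib, Finset.sum_const, Finset.card_univ, Fintype.card_fin,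
    nsmul_eq_mul, ← Finset.mul_sum]
  rw [Vr, tot]
  ring
end RealQuantities

section NextBounds

lemma cast_sub_sq_le (x y : ℕ) : ((x - y : ℕ) : ℝ) ^ 2 ≤ ((x : ℝ) - (y : ℝ)) ^ 2 := by
  rcases le_or_gt y x with h | h
  · rw [Nat.cast_sub h]
  · rw [Nat.sub_eq_zero_of_le h.le]
    simpa using sq_nonneg ((x:ℝ) - y)

lemma sqrt_Vr_le_add (x y : Fin n → Fin n → ℕ) (c : ℕ) (h : ∀ i j, x i j ≤ y i j + c) :
    Real.sqrt (Vr n x) ≤ Real.sqrt (Vr n y) + (n : ℝ) * c := by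
  have hb := Real.sqrt_nonneg (Vr n y)
  have h1 : Vr n x ≤ (Real.sqrt (Vr n y) + (n:ℝ) * c) ^ 2 := by
    have e1 : Vr n x ≤ ∑ i, ∑ j, ((y i j : ℝ) + c) ^ 2 := by
      refine Finset.sum_le_sum fun i _ => Finset.sum_le_sum fun j _ => ?_
      have hxc : (x i j : ℝ) ≤ (y i j : ℝ) + c := by
        have := h i j; push_cast; exact_mod_cast this
      have h0 : (0:ℝ) ≤ (x i j : ℝ) := Nat.cast_nonneg _
      nlinarith
    rw [sum_sq_add_expand] at e1
    have e2 := tot_le_sqrt (n := n) y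
    have e3 := sq_sqrt_Vr (n := n) y
    have hc0 : (0:ℝ) ≤ (c:ℝ) := Nat.cast_nonneg _
    nlinarith
  calc Real.sqrt (Vr n x) ≤ Real.sqrt ((Real.sqrt (Vr n y) + (n:ℝ) * c) ^ 2) :=
        Real.sqrt_le_sqrt h1
    _ = _ := Real.sqrt_sq (by positivity)

end NextBounds


section Drift

variable {A : Fin n → Fin n → ℕ → ℝ≥0∞} {lam sig : Fin n → Fin n → ℝ}
  {sched : (Fin n → Fin n → ℕ) → (Fin n → Fin n → ℕ)} {ε₁ : ℝ}

lemma Vr_next_le (hamax : 1 ≤ amax) (q a s : Fin n → Fin n → ℕ)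
    (ha : ∀ i j, a i j ≤ amax) (hs : ∀ i j, s i j ≤ 1) :
    Vr n (nextQ n q a s) ≤ Vr n q
      + 2 * (∑ i, ∑ j, (q i j : ℝ) * ((a i j : ℝ) - (s i j : ℝ)))
      + (n : ℝ) ^ 2 * (amax : ℝ) ^ 2 := by
  have key : ∀ i j : Fin n, ((nextQ n q a s i j : ℝ)) ^ 2
      ≤ (q i j : ℝ) ^ 2 + 2 * (q i j : ℝ) * ((a i j : ℝ) - (s i j : ℝ)) + (amax : ℝ) ^ 2 := by
    intro i j
    have h1 : ((nextQ n q a s i j : ℝ)) ^ 2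
        ≤ (((q i j : ℝ) + (a i j : ℝ)) - (s i j : ℝ)) ^ 2 := by
      have h := cast_sub_sq_le (q i j + a i j) (s i j)
      rw [Nat.cast_add] at h
      exact h
    have ha' : (a i j : ℝ) ≤ amax := by exact_mod_cast ha i j
    have hs' : (s i j : ℝ) ≤ 1 := by exact_mod_cast hs i j
    have hs0 : (0 : ℝ) ≤ s i j := Nat.cast_nonneg _
    have ha0 : (0 : ℝ) ≤ a i j := Nat.cast_nonneg _
    have hm1 : (1 : ℝ) ≤ amax := by exact_mod_cast hamax
    nlinarith
  have expand : ∑ i, ∑ j, ((q i j : ℝ) ^ 2 + 2 * (q i j : ℝ) * ((a i j : ℝ) - (s i j : ℝ))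
        + (amax : ℝ) ^ 2)
      = Vr n q + 2 * (∑ i, ∑ j, (q i j : ℝ) * ((a i j : ℝ) - (s i j : ℝ)))
        + (n : ℝ) ^ 2 * (amax : ℝ) ^ 2 := by
    have e : ∑ i, ∑ j, (2 * (q i j : ℝ) * ((a i j : ℝ) - (s i j : ℝ)))
        = 2 * ∑ i, ∑ j, (q i j : ℝ) * ((a i j : ℝ) - (s i j : ℝ)) := by
      rw [Finset.mul_sum]
      exact Finset.sum_congr rfl fun i _ => by
        rw [Finset.mul_sum]
        exact Finset.sum_congr rfl fun j _ => by ring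
    simp only [Finset.sum_add_distrib, e, Finset.sum_const, Finset.card_univ, Fintype.card_fin,
      nsmul_eq_mul]
    rw [Vr]
    ring
  calc Vr n (nextQ n q a s)
      ≤ ∑ i, ∑ j, ((q i j : ℝ) ^ 2 + 2 * (q i j : ℝ) * ((a i j : ℝ) - (s i j : ℝ))
          + (amax : ℝ) ^ 2) :=
        Finset.sum_le_sum fun i _ => Finset.sum_le_sum fun j _ => key i j
    _ = _ := expand

variable (hA : ArrivalDist n A lam sig amax) (hsched : IsMaxWeight n sched)
  (hε₁ : 0 < ε₁)
  (hintr : ∀ i, (∑ j, (lam i j + ε₁)) ≤ 1)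
  (hintc : ∀ j, (∑ i, (lam i j + ε₁)) ≤ 1)
  (hamax : 1 ≤ amax)

include hA hsched hε₁ hintr hintc hamax

lemma EV_next (q : Fin n → Fin n → ℕ) :
    ∑ a ∈ SuppA n amax, wA n A a * Vr n (nextQ n q a (sched q))
      ≤ Vr n q - 2 * ε₁ * tot n q + (n : ℝ) ^ 2 * (amax : ℝ) ^ 2 := by
  classical
  set s : Fin n → Fin n → ℕ := sched q with hsdef
  have hs1 : ∀ i j, s i j ≤ 1 := (hsched q).1.1
  set B : ℝ := (n : ℝ) ^ 2 * (amax : ℝ) ^ 2 with hB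
  set dotS : ℝ := ∑ i, ∑ j, (q i j : ℝ) * (s i j : ℝ) with hdotS
  set dotL : ℝ := ∑ i, ∑ j, (q i j : ℝ) * lam i j with hdotL
  -- expected value of the inner product with arrivals
  have hmean : ∑ a ∈ SuppA n amax, wA n A a * (∑ i, ∑ j, (q i j : ℝ) * (a i j : ℝ)) = dotL := by
    have e1 : ∀ a : Fin n → Fin n → ℕ, wA n A a * (∑ i, ∑ j, (q i j : ℝ) * (a i j : ℝ))
        = ∑ i, ∑ j, (q i j : ℝ) * (wA n A a * (a i j : ℝ)) := by
      intro a
      rw [Finset.mul_sum]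
      exact Finset.sum_congr rfl fun i _ => by
        rw [Finset.mul_sum]
        exact Finset.sum_congr rfl fun j _ => by ring
    rw [Finset.sum_congr rfl fun a _ => e1 a, Finset.sum_comm]
    refine Finset.sum_congr rfl fun i _ => ?_
    rw [Finset.sum_comm]
    refine Finset.sum_congr rfl fun j _ => ?_
    rw [← Finset.mul_sum, mean_a hA]
  -- MaxWeight dominates lam + ε₁
  have hmw : dotL + ε₁ * tot n q ≤ dotS := by
    have h0 : ∀ i j : Fin n, 0 ≤ lam i j + ε₁ := fun i j => by
      have := lam_nonneg hA i j
      linarith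
    have h := dot_le_maxweight hsched q (fun i j => lam i j + ε₁) h0 hintr hintc
    have e : ∑ i, ∑ j, (q i j : ℝ) * (lam i j + ε₁) = dotL + ε₁ * tot n q := by
      simp only [mul_add, Finset.sum_add_distrib, hdotL]
      rw [tot, Finset.mul_sum]
      congr 1
      exact Finset.sum_congr rfl fun i _ => by
        rw [Finset.mul_sum]
        exact Finset.sum_congr rfl fun j _ => by ring
    rw [e] at h
    exact h
  -- pointwise quadratic bound, then sum
  have step1 : ∑ a ∈ SuppA n amax, wA n A a * Vr n (nextQ n q a s)
      ≤ ∑ a ∈ SuppA n amax, ((Vr n q + B - 2 * dotS) * wA n A a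
          + 2 * (wA n A a * (∑ i, ∑ j, (q i j : ℝ) * (a i j : ℝ)))) := by
    refine Finset.sum_le_sum fun a haS => ?_
    have hb := Vr_next_le hamax q a s (mem_SuppA.1 haS) hs1
    have e2 : ∑ i, ∑ j, (q i j : ℝ) * ((a i j : ℝ) - (s i j : ℝ))
        = (∑ i, ∑ j, (q i j : ℝ) * (a i j : ℝ)) - dotS := by
      rw [hdotS, ← Finset.sum_sub_distrib]
      refine Finset.sum_congr rfl fun i _ => ?_
      rw [← Finset.sum_sub_distrib]
      exact Finset.sum_congr rfl fun j _ => by ring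
    rw [e2] at hb
    have hw0 := wA_nonneg A a
    nlinarith [mul_le_mul_of_nonneg_left hb hw0]
  rw [Finset.sum_add_distrib, ← Finset.mul_sum, ← Finset.mul_sum, sum_wA hA, hmean] at step1
  linarith

end Drift


noncomputable def Cdrift (n amax : ℕ) (ε₁ : ℝ) : ℝ :=
  3 * (n : ℝ) ^ 5 * (amax : ℝ) ^ 4 / (2 * ε₁) + (n : ℝ) ^ 3 * (amax : ℝ) ^ 3

section CubeDrift

variable {A : Fin n → Fin n → ℕ → ℝ≥0∞} {lam sig : Fin n → Fin n → ℝ}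
  {sched : (Fin n → Fin n → ℕ) → (Fin n → Fin n → ℕ)} {ε₁ : ℝ}

lemma cube_ineq (t b c V W : ℝ) (hb0 : 0 ≤ b) (hc0 : 0 ≤ c)
    (ht2 : t ^ 2 = W) (hb2 : b ^ 2 = V) (hd : |t - b| ≤ c) :
    t ^ 3 ≤ b ^ 3 + (3 * b / 2) * c ^ 2 + c ^ 3 - (3 * b / 2) * V + (3 * b / 2) * W := by
  have hd1 := (abs_le.1 hd).1
  have hd2 := (abs_le.1 hd).2
  have hsq : (t - b) ^ 2 ≤ c ^ 2 := sq_le_sq' (by linarith) (by linarith)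
  have hcub : (t - b) ^ 3 ≤ c ^ 3 := by
    nlinarith [sq_nonneg (c - (t - b)), sq_nonneg (c + (t - b))]
  have hid : t ^ 3 = b ^ 3 + (3 * b / 2) * (t ^ 2 - b ^ 2)
      + (3 / 2) * b * (t - b) ^ 2 + (t - b) ^ 3 := by ring
  nlinarith [mul_le_mul_of_nonneg_left hsq (by linarith : (0:ℝ) ≤ 3 / 2 * b)]

lemma sqrt_close (hamax : 1 ≤ amax) (q a s : Fin n → Fin n → ℕ)
    (ha : ∀ i j, a i j ≤ amax) (hs : ∀ i j, s i j ≤ 1) :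
    |Real.sqrt (Vr n (nextQ n q a s)) - Real.sqrt (Vr n q)| ≤ (n : ℝ) * amax := by
  have h1 : ∀ i j, nextQ n q a s i j ≤ q i j + amax := fun i j => by
    have := ha i j; simp only [nextQ]; omega
  have h2 : ∀ i j, q i j ≤ nextQ n q a s i j + amax := fun i j => by
    have := hs i j; have := ha i j; simp only [nextQ]; omega
  have b1 := sqrt_Vr_le_add (nextQ n q a s) q amax h1
  have b2 := sqrt_Vr_le_add q (nextQ n q a s) amax h2
  rw [abs_le]
  constructor <;> linarith

variable (hA : ArrivalDist n A lam sig amax) (hsched : IsMaxWeight n sched)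
  (hε₁ : 0 < ε₁)
  (hintr : ∀ i, (∑ j, (lam i j + ε₁)) ≤ 1)
  (hintc : ∀ j, (∑ i, (lam i j + ε₁)) ≤ 1)
  (hamax : 1 ≤ amax) (hn : 1 ≤ n)

include hA hsched hε₁ hintr hintc hamax hn

set_option maxHeartbeats 1600000 in
lemma drift_real (q : Fin n → Fin n → ℕ) :
    ∑ a ∈ SuppA n amax, wA n A a * cube n (nextQ n q a (sched q))
      + (3 * ε₁ / (2 * (n : ℝ))) * (tot n q) ^ 2 ≤ cube n q + Cdrift n amax ε₁ := by
  classical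
  set b : ℝ := Real.sqrt (Vr n q) with hbdef
  set T : ℝ := tot n q with hTdef
  set c : ℝ := (n : ℝ) * (amax : ℝ) with hcdef
  clear_value b T c
  have hn1 : (1 : ℝ) ≤ (n : ℝ) := by exact_mod_cast hn
  have ham1 : (1 : ℝ) ≤ (amax : ℝ) := by exact_mod_cast hamax
  have hb0 : 0 ≤ b := by rw [hbdef]; exact Real.sqrt_nonneg _
  have hT0 : 0 ≤ T := by rw [hTdef]; exact tot_nonneg q
  have hbT : b ≤ T := by rw [hbdef, hTdef]; exact sqrt_Vr_le_tot q
  have hTb : T ≤ (n : ℝ) * b := by rw [hbdef, hTdef]; exact tot_le_sqrt q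
  have hc0 : (0 : ℝ) ≤ c := by rw [hcdef]; positivity
  have hs1 : ∀ i j, sched q i j ≤ 1 := (hsched q).1.1
  have hb2 : b ^ 2 = Vr n q := by rw [hbdef]; exact sq_sqrt_Vr q
  -- pointwise cubic bound
  have key : ∀ a ∈ SuppA n amax, wA n A a * cube n (nextQ n q a (sched q))
      ≤ wA n A a * ((cube n q + (3 * b / 2) * c ^ 2 + c ^ 3 - (3 * b / 2) * Vr n q)
          + (3 * b / 2) * Vr n (nextQ n q a (sched q))) := by
    intro a haS
    refine mul_le_mul_of_nonneg_left ?_ (wA_nonneg A a)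
    have habs := sqrt_close hamax q a (sched q) (mem_SuppA.1 haS) hs1
    rw [← hbdef, ← hcdef] at habs
    simp only [cube]
    rw [← hbdef]
    exact cube_ineq _ _ _ _ _ hb0 hc0 (sq_sqrt_Vr _) hb2 habs
  -- sum it
  have sum1 : ∑ a ∈ SuppA n amax, wA n A a * cube n (nextQ n q a (sched q))
      ≤ (cube n q + (3 * b / 2) * c ^ 2 + c ^ 3 - (3 * b / 2) * Vr n q)
        + (3 * b / 2) * ∑ a ∈ SuppA n amax, wA n A a * Vr n (nextQ n q a (sched q)) := by
    have e : ∀ a : Fin n → Fin n → ℕ,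
        wA n A a * ((cube n q + (3 * b / 2) * c ^ 2 + c ^ 3 - (3 * b / 2) * Vr n q)
          + (3 * b / 2) * Vr n (nextQ n q a (sched q)))
        = (cube n q + (3 * b / 2) * c ^ 2 + c ^ 3 - (3 * b / 2) * Vr n q) * wA n A a
          + (3 * b / 2) * (wA n A a * Vr n (nextQ n q a (sched q))) := fun a => by ring
    calc ∑ a ∈ SuppA n amax, wA n A a * cube n (nextQ n q a (sched q))
        ≤ ∑ a ∈ SuppA n amax, ((cube n q + (3 * b / 2) * c ^ 2 + c ^ 3 - (3 * b / 2) * Vr n q)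
            * wA n A a + (3 * b / 2) * (wA n A a * Vr n (nextQ n q a (sched q)))) := by
          refine Finset.sum_le_sum fun a haS => ?_
          rw [← e a]
          exact key a haS
      _ = _ := by
          rw [Finset.sum_add_distrib, ← Finset.mul_sum, ← Finset.mul_sum, sum_wA hA, mul_one]

  have hEV := EV_next hA hsched hε₁ hintr hintc hamax q
  rw [← hTdef] at hEV
  have hm0 : (0 : ℝ) ≤ 3 * b / 2 := by linarith
  have step : ∑ a ∈ SuppA n amax, wA n A a * cube n (nextQ n q a (sched q))
      ≤ cube n q + 3 * b * c ^ 2 + c ^ 3 - 3 * ε₁ * b * T := by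
    have h2 := mul_le_mul_of_nonneg_left hEV hm0
    have hBc : (n : ℝ) ^ 2 * (amax : ℝ) ^ 2 = c ^ 2 := by rw [hcdef]; ring
    rw [hBc] at h2
    nlinarith [sum1, h2]
  -- final arithmetic
  have hn0 : (0 : ℝ) < (n : ℝ) := by linarith
  have hκ : (3 * ε₁ / (2 * (n : ℝ))) * T ^ 2 ≤ 3 * ε₁ / 2 * (b * T) := by
    have hTT : T ^ 2 ≤ (n : ℝ) * (b * T) := by nlinarith
    have h3 := mul_le_mul_of_nonneg_left hTT
      (le_of_lt (by positivity : (0 : ℝ) < 3 * ε₁ / (2 * (n : ℝ))))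
    calc (3 * ε₁ / (2 * (n : ℝ))) * T ^ 2 ≤ (3 * ε₁ / (2 * (n : ℝ))) * ((n : ℝ) * (b * T)) := h3
      _ = 3 * ε₁ / 2 * (b * T) := by
          rw [div_mul_eq_mul_div, div_mul_eq_mul_div, div_eq_div_iff (by positivity) (by norm_num)]
          ring
  have hbb : 3 * ε₁ / 2 * (b * b) ≤ 3 * ε₁ / 2 * (b * T) :=
    mul_le_mul_of_nonneg_left (by nlinarith) (by positivity)
  have hAM : 3 * b * c ^ 2 - 3 * ε₁ / 2 * (b * b) ≤ 3 * c ^ 4 / (2 * ε₁) := by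
    rw [le_div_iff₀ (by positivity : (0 : ℝ) < 2 * ε₁)]
    nlinarith [sq_nonneg (c ^ 2 - ε₁ * b)]
  have hmono : 3 * c ^ 4 / (2 * ε₁) ≤ 3 * (n : ℝ) ^ 5 * (amax : ℝ) ^ 4 / (2 * ε₁) := by
    rw [div_le_div_iff_of_pos_right (by positivity : (0 : ℝ) < 2 * ε₁)]
    have h4 : c ^ 4 = (n : ℝ) ^ 4 * (amax : ℝ) ^ 4 := by rw [hcdef]; ring
    rw [h4]
    have h5 : (n : ℝ) ^ 4 ≤ (n : ℝ) ^ 5 :=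
      pow_le_pow_right₀ hn1 (by norm_num)
    have h6 : (0:ℝ) ≤ (amax : ℝ) ^ 4 := by positivity
    nlinarith
  have hc3 : c ^ 3 = (n : ℝ) ^ 3 * (amax : ℝ) ^ 3 := by rw [hcdef]; ring
  have hC : Cdrift n amax ε₁
      = 3 * (n : ℝ) ^ 5 * (amax : ℝ) ^ 4 / (2 * ε₁) + (n : ℝ) ^ 3 * (amax : ℝ) ^ 3 := rfl
  linarith [step, hκ, hbb, hAM, hmono]

end CubeDrift


section Kernel

variable {A : Fin n → Fin n → ℕ → ℝ≥0∞} {lam sig : Fin n → Fin n → ℝ}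
  {sched : (Fin n → Fin n → ℕ) → (Fin n → Fin n → ℕ)}
  (hA : ArrivalDist n A lam sig amax)

include hA

lemma kernelMW_apply_sum (q : Fin n → Fin n → ℕ) (h : (Fin n → Fin n → ℕ) → ℝ≥0∞) :
    ∑' q', kernelMW n A sched q q' * h q'
      = ∑ a ∈ SuppA n amax, jointA n A a * h (nextQ n q a (sched q)) := by
  calc ∑' q', kernelMW n A sched q q' * h q'
      = ∑' q', ∑' a : Fin n → Fin n → ℕ,
          jointA n A a * (if nextQ n q a (sched q) = q' then 1 else 0) * h q' := by
        refine tsum_congr fun q' => ?_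
        rw [kernelMW, ENNReal.tsum_mul_right]
    _ = ∑' a : Fin n → Fin n → ℕ, ∑' q',
          jointA n A a * (if nextQ n q a (sched q) = q' then 1 else 0) * h q' :=
        ENNReal.tsum_comm
    _ = ∑' a : Fin n → Fin n → ℕ, jointA n A a * h (nextQ n q a (sched q)) := by
        refine tsum_congr fun a => ?_
        rw [tsum_eq_single (nextQ n q a (sched q)) (fun q' hq' => by simp [Ne.symm hq'])]
        simp
    _ = ∑ a ∈ SuppA n amax, jointA n A a * h (nextQ n q a (sched q)) :=
        tsum_eq_sum fun a ha => by rw [jointA_eq_zero hA ha, zero_mul]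

lemma sum_jointA : ∑ a ∈ SuppA n amax, jointA n A a = 1 := by
  rw [Finset.sum_congr rfl fun a _ => jointA_eq_ofReal hA a,
    ← ENNReal.ofReal_sum_of_nonneg fun a _ => wA_nonneg A a, sum_wA hA, ENNReal.ofReal_one]

lemma kernelMW_markov (q : Fin n → Fin n → ℕ) :
    ∑' q', kernelMW n A sched q q' = 1 := by
  have h := kernelMW_apply_sum hA (sched := sched) q (fun _ => 1)
  simp only [mul_one] at h
  rw [h, sum_jointA hA]

end Kernel

section Stationarity

lemma stationarity_bound {X : Type*} (P : X → X → ℝ≥0∞) (pd : X → ℝ≥0∞)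
    (hpd1 : ∑' q, pd q = 1) (hinv : ∀ q', ∑' q, pd q * P q q' = pd q')
    (hP : ∀ q, ∑' q', P q q' = 1)
    (f g : X → ℝ≥0∞) (b : ℝ≥0∞) (hf : ∀ q, f q ≠ ⊤)
    (hdrift : ∀ q, (∑' q', P q q' * f q') + g q ≤ f q + b) :
    ∑' q, pd q * g q ≤ b := by
  rw [ENNReal.tsum_eq_iSup_sum]
  refine iSup_le fun F => ?_
  set M : ℝ≥0∞ := ∑ q ∈ F, f q with hM
  have hMtop : M ≠ ⊤ := by
    rw [hM]
    exact (ENNReal.sum_lt_top.2 fun q _ => lt_top_iff_ne_top.2 (hf q)).ne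
  have hfMmem : ∀ q ∈ F, f q ≤ M := fun q hq =>
    Finset.single_le_sum (fun _ _ => zero_le) hq
  set fM : (X → ℝ≥0∞) := fun q => min (f q) M with hfMdef
  have key : ∀ q, (∑' q', P q q' * fM q') + (if f q ≤ M then g q else 0) ≤ fM q + b := by
    intro q
    by_cases h : f q ≤ M
    · rw [if_pos h, show fM q = f q from min_eq_left h]
      refine le_trans (add_le_add ?_ le_rfl) (hdrift q)
      exact ENNReal.tsum_le_tsum fun q' => mul_le_mul_right (min_le_left _ _) _
    · rw [if_neg h, add_zero, show fM q = M from min_eq_right (le_of_not_ge h)]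
      calc ∑' q', P q q' * fM q' ≤ ∑' q', P q q' * M :=
            ENNReal.tsum_le_tsum fun q' => mul_le_mul_right (min_le_right _ _) _
        _ = M := by rw [ENNReal.tsum_mul_right, hP, one_mul]
        _ ≤ M + b := le_self_add
  have int1 : ∑' q, pd q * ((∑' q', P q q' * fM q') + (if f q ≤ M then g q else 0))
      ≤ ∑' q, pd q * (fM q + b) :=
    ENNReal.tsum_le_tsum fun q => mul_le_mul_right (key q) _
  have lhs : ∑' q, pd q * ((∑' q', P q q' * fM q') + (if f q ≤ M then g q else 0))
      = (∑' q, pd q * ∑' q', P q q' * fM q')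
        + ∑' q, pd q * (if f q ≤ M then g q else 0) := by
    simp only [mul_add]
    rw [ENNReal.tsum_add]
  have rhs : ∑' q, pd q * (fM q + b) = (∑' q, pd q * fM q) + b := by
    simp only [mul_add]
    rw [ENNReal.tsum_add, ENNReal.tsum_mul_right, hpd1, one_mul]
  have fub : ∑' q, pd q * ∑' q', P q q' * fM q' = ∑' q, pd q * fM q := by
    calc ∑' q, pd q * ∑' q', P q q' * fM q'
        = ∑' q, ∑' q', pd q * (P q q' * fM q') :=
          tsum_congr fun q => ENNReal.tsum_mul_left.symm
      _ = ∑' q', ∑' q, pd q * P q q' * fM q' := by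
          rw [ENNReal.tsum_comm]
          exact tsum_congr fun q' => tsum_congr fun q => (mul_assoc _ _ _).symm
      _ = ∑' q', (∑' q, pd q * P q q') * fM q' :=
          tsum_congr fun q' => ENNReal.tsum_mul_right
      _ = ∑' q', pd q' * fM q' := tsum_congr fun q' => by rw [hinv q']
  have hfMfin : (∑' q, pd q * fM q) ≠ ⊤ := by
    have hle : ∑' q, pd q * fM q ≤ ∑' q, pd q * M :=
      ENNReal.tsum_le_tsum fun q => mul_le_mul_right (min_le_right _ _) _
    rw [ENNReal.tsum_mul_right, hpd1, one_mul] at hle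
    exact ne_top_of_le_ne_top hMtop hle
  have main : (∑' q, pd q * fM q) + ∑' q, pd q * (if f q ≤ M then g q else 0)
      ≤ (∑' q, pd q * fM q) + b := by
    calc (∑' q, pd q * fM q) + ∑' q, pd q * (if f q ≤ M then g q else 0)
        = ∑' q, pd q * ((∑' q', P q q' * fM q') + (if f q ≤ M then g q else 0)) := by
          rw [lhs, fub]
      _ ≤ ∑' q, pd q * (fM q + b) := int1
      _ = (∑' q, pd q * fM q) + b := rhs
  have cancel := (ENNReal.add_le_add_iff_left hfMfin).1 main
  calc ∑ q ∈ F, pd q * g q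
      = ∑ q ∈ F, pd q * (if f q ≤ M then g q else 0) :=
        Finset.sum_congr rfl fun q hq => by rw [if_pos (hfMmem q hq)]
    _ ≤ ∑' q, pd q * (if f q ≤ M then g q else 0) := ENNReal.sum_le_tsum F
    _ ≤ b := cancel

end Stationarity

section SumSq

lemma sum_sq_le_sq_sum {m : ℕ} (y : Fin m → ℝ≥0∞) : ∑ i, y i ^ 2 ≤ (∑ i, y i) ^ 2 := by
  calc ∑ i, y i ^ 2 ≤ ∑ i, y i * (∑ k, y k) :=
        Finset.sum_le_sum fun i _ => by
          rw [sq]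
          exact mul_le_mul_right (Finset.single_le_sum (fun _ _ => zero_le)
            (Finset.mem_univ i)) _
    _ = (∑ i, y i) * (∑ k, y k) := by rw [← Finset.sum_mul]
    _ = (∑ i, y i) ^ 2 := (sq _).symm

end SumSq

end SwitchProof

open SwitchProof in
theorem steady_state_quadratic_moments_finite
    (n : ℕ) (hn : 1 ≤ n)
    (lam sig : Fin n → Fin n → ℝ) (amax : ℕ) (hamax : 1 ≤ amax)
    (A : Fin n → Fin n → ℕ → ℝ≥0∞)
    (hA : ArrivalDist n A lam sig amax)
    (ε₁ : ℝ) (hε₁ : 0 < ε₁)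
    (hintr : ∀ i, (∑ j, (lam i j + ε₁)) ≤ 1)
    (hintc : ∀ j, (∑ i, (lam i j + ε₁)) ≤ 1)
    (sched : (Fin n → Fin n → ℕ) → (Fin n → Fin n → ℕ))
    (hsched : IsMaxWeight n sched)
    (pd : (Fin n → Fin n → ℕ) → ℝ≥0∞)
    (hpd : IsInvariant n (kernelMW n A sched) pd) :
    Etot2 n pd ≠ ⊤ ∧
    (∑' q : Fin n → Fin n → ℕ, pd q * (∑ i, ∑ j, ((q i j : ℝ≥0∞)) ^ 2)) ≠ ⊤ ∧
    (∑' q : Fin n → Fin n → ℕ, pd q * (∑ i, (∑ j, (q i j : ℝ≥0∞)) ^ 2)) ≠ ⊤ ∧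
    (∑' q : Fin n → Fin n → ℕ, pd q * (∑ j, (∑ i, (q i j : ℝ≥0∞)) ^ 2)) ≠ ⊤ := by
  classical
  obtain ⟨hpd1, hinv⟩ := hpd
  have hn1 : (1 : ℝ) ≤ (n : ℝ) := by exact_mod_cast hn
  have hκpos : (0 : ℝ) < 3 * ε₁ / (2 * (n : ℝ)) := by positivity
  -- the ENNReal drift condition
  have hdrift : ∀ q, (∑' q', kernelMW n A sched q q' * ENNReal.ofReal (cube n q'))
      + ENNReal.ofReal (3 * ε₁ / (2 * (n : ℝ)) * (tot n q) ^ 2)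
      ≤ ENNReal.ofReal (cube n q) + ENNReal.ofReal (Cdrift n amax ε₁) := by
    intro q
    rw [kernelMW_apply_sum hA q (fun q' => ENNReal.ofReal (cube n q'))]
    have e1 : ∑ a ∈ SuppA n amax, jointA n A a * ENNReal.ofReal (cube n (nextQ n q a (sched q)))
        = ENNReal.ofReal (∑ a ∈ SuppA n amax, wA n A a * cube n (nextQ n q a (sched q))) := by
      rw [ENNReal.ofReal_sum_of_nonneg fun a _ => mul_nonneg (wA_nonneg A a) (cube_nonneg _)]
      refine Finset.sum_congr rfl fun a _ => ?_
      rw [jointA_eq_ofReal hA a, ← ENNReal.ofReal_mul (wA_nonneg A a)]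
    rw [e1, ← ENNReal.ofReal_add
      (Finset.sum_nonneg fun a _ => mul_nonneg (wA_nonneg A a) (cube_nonneg _))
      (by positivity)]
    refine le_trans (ENNReal.ofReal_le_ofReal
      (drift_real hA hsched hε₁ hintr hintc hamax hn q)) ?_
    refine le_of_eq (ENNReal.ofReal_add (cube_nonneg q) ?_)
    unfold Cdrift
    positivity
  have hsb := stationarity_bound (kernelMW n A sched) pd hpd1 hinv
    (fun q => kernelMW_markov hA q)
    (fun q => ENNReal.ofReal (cube n q))
    (fun q => ENNReal.ofReal (3 * ε₁ / (2 * (n : ℝ)) * (tot n q) ^ 2))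
    (ENNReal.ofReal (Cdrift n amax ε₁))
    (fun q => ENNReal.ofReal_ne_top) hdrift
  -- identify the integrand of Etot2
  have hX : ∀ q : Fin n → Fin n → ℕ,
      (∑ i, ∑ j, (q i j : ℝ≥0∞)) = ENNReal.ofReal (tot n q) := by
    intro q
    rw [tot, ENNReal.ofReal_sum_of_nonneg
      (fun i _ => Finset.sum_nonneg fun j _ => Nat.cast_nonneg _)]
    refine Finset.sum_congr rfl fun i _ => ?_
    rw [ENNReal.ofReal_sum_of_nonneg (fun j _ => Nat.cast_nonneg _)]
    exact Finset.sum_congr rfl fun j _ => (ENNReal.ofReal_natCast _).symm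
  have hX2 : ∀ q : Fin n → Fin n → ℕ,
      (∑ i, ∑ j, (q i j : ℝ≥0∞)) ^ 2 = ENNReal.ofReal ((tot n q) ^ 2) := by
    intro q
    rw [hX q, ← ENNReal.ofReal_pow (tot_nonneg q)]
  have hE2 : ENNReal.ofReal (3 * ε₁ / (2 * (n : ℝ))) * Etot2 n pd
      ≤ ENNReal.ofReal (Cdrift n amax ε₁) := by
    rw [Etot2, show (∑' q : Fin n → Fin n → ℕ, pd q * (∑ i, ∑ j, (q i j : ℝ≥0∞)) ^ 2)
        = ∑' q : Fin n → Fin n → ℕ, pd q * ENNReal.ofReal ((tot n q) ^ 2) from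
      tsum_congr fun q => by rw [hX2 q]]
    rw [← ENNReal.tsum_mul_left]
    refine le_trans (le_of_eq (tsum_congr fun q => ?_)) hsb
    simp only [ENNReal.ofReal_mul (le_of_lt hκpos)]
    ring
  have hfin : Etot2 n pd ≠ ⊤ := by
    intro h
    rw [h, ENNReal.mul_top (ne_of_gt (ENNReal.ofReal_pos.2 hκpos))] at hE2
    exact ENNReal.ofReal_ne_top (top_le_iff.1 hE2)
  -- the three other moments are dominated by Etot2
  have c1 : ∀ q : Fin n → Fin n → ℕ,
      (∑ i, ∑ j, ((q i j : ℝ≥0∞)) ^ 2) ≤ (∑ i, ∑ j, (q i j : ℝ≥0∞)) ^ 2 := fun q =>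
    le_trans (Finset.sum_le_sum fun i _ => sum_sq_le_sq_sum (fun j => (q i j : ℝ≥0∞)))
      (sum_sq_le_sq_sum (fun i => ∑ j, (q i j : ℝ≥0∞)))
  have c2 : ∀ q : Fin n → Fin n → ℕ,
      (∑ i, (∑ j, (q i j : ℝ≥0∞)) ^ 2) ≤ (∑ i, ∑ j, (q i j : ℝ≥0∞)) ^ 2 := fun q =>
    sum_sq_le_sq_sum (fun i => ∑ j, (q i j : ℝ≥0∞))
  have c3 : ∀ q : Fin n → Fin n → ℕ,
      (∑ j, (∑ i, (q i j : ℝ≥0∞)) ^ 2) ≤ (∑ i, ∑ j, (q i j : ℝ≥0∞)) ^ 2 := fun q => by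
    rw [show (∑ i, ∑ j, (q i j : ℝ≥0∞)) = ∑ j, ∑ i, (q i j : ℝ≥0∞) from Finset.sum_comm]
    exact sum_sq_le_sq_sum (fun j => ∑ i, (q i j : ℝ≥0∞))
  have dom : ∀ (h : (Fin n → Fin n → ℕ) → ℝ≥0∞),
      (∀ q, h q ≤ (∑ i, ∑ j, (q i j : ℝ≥0∞)) ^ 2) →
      (∑' q : Fin n → Fin n → ℕ, pd q * h q) ≠ ⊤ := by
    intro h hh
    refine ne_top_of_le_ne_top hfin ?_
    rw [Etot2]
    exact ENNReal.tsum_le_tsum fun q => mul_le_mul_right (hh q) _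
  exact ⟨hfin, dom _ c1, dom _ c2, dom _ c3⟩
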